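/- (Pointwise linear-algebra content of Lemma 3.4: the n-th wedge power of Ψ_f^*Ω equals f^n times that of Ω.) Let n ≥ 1, c ∈ ℝ, and a, p ∈ ℝ^n. Define the alternating bilinear form ω on ℝ^n × ℝ^n by ω(u,v) = c·(⟨u_q, v_p⟩ − ⟨u_p, v_q⟩) − (⟨a, u_q⟩⟨p, v_q⟩ − ⟨a, v_q⟩⟨p, u_q⟩), writing u = (u_q, u_p). Then the 2n × 2n matrix M with entries M_{ij} = ω(e_i, e_j), where (e_i) is the standard basis of ℝ^n × ℝ^n ≅ ℝ^{2n}, has determinant det M = c^{2n}. -/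

import Mathlib

noncomputable section

open Matrix

/-- The alternating bilinear form `ω(u,v) = c·(⟨u_q,v_p⟩ − ⟨u_p,v_q⟩)
− (⟨a,u_q⟩⟨p,v_q⟩ − ⟨a,v_q⟩⟨p,u_q⟩)` on `ℝⁿ × ℝⁿ`. -/
def omegaForm (n : ℕ) (c : ℝ) (a p : Fin n → ℝ)
    (u v : (Fin n → ℝ) × (Fin n → ℝ)) : ℝ :=
  c * (u.1 ⬝ᵥ v.2 - u.2 ⬝ᵥ v.1) - ((a ⬝ᵥ u.1) * (p ⬝ᵥ v.1) - (a ⬝ᵥ v.1) * (p ⬝ᵥ u.1))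

/-- The standard basis of `ℝⁿ × ℝⁿ ≅ ℝ²ⁿ`, indexed by `Fin n ⊕ Fin n`. -/
def stdBasisPhase (n : ℕ) : Fin n ⊕ Fin n → (Fin n → ℝ) × (Fin n → ℝ) :=
  Sum.elim (fun i => ((Pi.single i 1 : Fin n → ℝ), 0))
    (fun i => (0, (Pi.single i 1 : Fin n → ℝ)))

/-- The standard symplectic matrix `J = [[0, 1], [-1, 0]]` has determinant `1`,
via the factorization `J = U * L * U` with unitriangular `U, L`. -/
lemma det_symplJ (n : ℕ) :
    (Matrix.fromBlocks 0 1 (-1) 0 : Matrix (Fin n ⊕ Fin n) (Fin n ⊕ Fin n) ℝ).det = 1 := by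
  have h : (Matrix.fromBlocks 0 1 (-1) 0 : Matrix (Fin n ⊕ Fin n) (Fin n ⊕ Fin n) ℝ)
      = Matrix.fromBlocks 1 1 0 1 * Matrix.fromBlocks 1 0 (-1) 1 * Matrix.fromBlocks 1 1 0 1 := by
    simp [Matrix.fromBlocks_multiply]
  simp [h, det_mul, det_fromBlocks_zero₂₁, det_fromBlocks_zero₁₂]

theorem statement11 (n : ℕ) (hn : 1 ≤ n) (c : ℝ) (a p : Fin n → ℝ) :
    (Matrix.of fun i j : Fin n ⊕ Fin n =>
        omegaForm n c a p (stdBasisPhase n i) (stdBasisPhase n j)).det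
      = c ^ (2 * n) := by
  haveI : Nonempty (Fin n) := Fin.pos_iff_nonempty.mp (by omega)
  set A : Matrix (Fin n) (Fin n) ℝ := Matrix.of (fun i j => a j * p i - a i * p j) with hA
  have hM : (Matrix.of fun i j : Fin n ⊕ Fin n =>
        omegaForm n c a p (stdBasisPhase n i) (stdBasisPhase n j))
      = Matrix.fromBlocks A (c • (1 : Matrix (Fin n) (Fin n) ℝ))
          (-(c • (1 : Matrix (Fin n) (Fin n) ℝ))) 0 := by
    ext i j
    rcases i with i | i <;> rcases j with j | j <;>
      simp [omegaForm, stdBasisPhase, hA, Matrix.one_apply, Pi.single_apply, dotProduct,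
        Finset.sum_ite_eq', mul_comm, eq_comm]
  rw [hM]
  have hcard : Fintype.card (Fin n ⊕ Fin n) = 2 * n := by simp [two_mul]
  have hK : (Matrix.fromBlocks 0 (c • (1 : Matrix (Fin n) (Fin n) ℝ))
        (-(c • (1 : Matrix (Fin n) (Fin n) ℝ))) 0).det = c ^ (2 * n) := by
    have : (Matrix.fromBlocks 0 (c • (1 : Matrix (Fin n) (Fin n) ℝ))
          (-(c • (1 : Matrix (Fin n) (Fin n) ℝ))) 0)
        = c • (Matrix.fromBlocks 0 1 (-1) 0 : Matrix (Fin n ⊕ Fin n) (Fin n ⊕ Fin n) ℝ) := by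
      rw [Matrix.fromBlocks_smul]; simp
    rw [this, det_smul, det_symplJ, mul_one, hcard]
  rcases eq_or_ne c 0 with rfl | hc
  · simp only [zero_smul, neg_zero]
    rw [det_fromBlocks_zero₂₁]
    rw [Matrix.det_zero, mul_zero, eq_comm]
    exact zero_pow (by omega)
  · have hfact : Matrix.fromBlocks A (c • (1 : Matrix (Fin n) (Fin n) ℝ))
          (-(c • (1 : Matrix (Fin n) (Fin n) ℝ))) 0
        = Matrix.fromBlocks 1 ((-c⁻¹) • A) 0 1 *
          Matrix.fromBlocks 0 (c • 1) (-(c • 1)) 0 := by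
      rw [Matrix.fromBlocks_multiply]
      simp [smul_smul, hc]
    rw [hfact, det_mul, det_fromBlocks_zero₂₁, det_one, hK]
    ring
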